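/- Let V and W be finite-dimensional real vector spaces, and let C ⊆ V and D ⊆ W be pointed polyhedral cones with Submodule.span ℝ C = ⊤ and Submodule.span ℝ D = ⊤. Then the tensor product cone C ⊗ D ⊆ V ⊗[ℝ] W satisfies: (i) (C ⊗ D) ∩ (−(C ⊗ D)) = {0}, i.e., C ⊗ D is a pointed cone; and (ii) the linear span of C ⊗ D is all of V ⊗[ℝ] W. -/

import Mathlib

open scoped BigOperators TensorProduct

/-- A polyhedral cone: the set of all nonnegative linear combinations of a
finite set of vectors. -/
def IsPolyhedralCone {V : Type*} [AddCommGroup V] [Module ℝ V] (C : Set V) : Prop :=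
  ∃ s : Finset V,
    C = {x | ∃ c : V → ℝ, (∀ v, 0 ≤ c v) ∧ x = ∑ v ∈ s, c v • v}

/-- The tensor product cone of two cones: all nonnegative linear combinations of
elementary tensors `x ⊗ y` with `x ∈ C`, `y ∈ D`. -/
def tensorCone {V W : Type*} [AddCommGroup V] [Module ℝ V] [AddCommGroup W] [Module ℝ W]
    (C : Set V) (D : Set W) : Set (V ⊗[ℝ] W) :=
  {z | ∃ (n : ℕ) (c : Fin n → ℝ) (x : Fin n → V) (y : Fin n → W),
    (∀ i, 0 ≤ c i) ∧ (∀ i, x i ∈ C) ∧ (∀ i, y i ∈ D) ∧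
      z = ∑ i, c i • (x i ⊗ₜ[ℝ] y i)}

/-- A linear functional nonnegative on a pointed polyhedral cone, vanishing only at `0` on it. -/
lemma exists_strict_pos_functional {V : Type*} [AddCommGroup V] [Module ℝ V]
    [FiniteDimensional ℝ V] {C : Set V} (hC : IsPolyhedralCone C)
    (hpt : C ∩ (-C) = {0}) :
    ∃ f : V →ₗ[ℝ] ℝ, (∀ x ∈ C, 0 ≤ f x) ∧ ∀ x ∈ C, f x = 0 → x = 0 := by
  classical
  obtain ⟨s, hs⟩ := hC
  -- conic combinations of generators lie in C
  have hsum : ∀ {ι : Type} (t : Finset ι) (w : ι → ℝ) (v : ι → V),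
      (∀ i ∈ t, 0 ≤ w i) → (∀ i ∈ t, v i ∈ s) → (∑ i ∈ t, w i • v i) ∈ C := by
    intro ι t w v hw hv
    rw [hs]
    refine ⟨fun u => ∑ i ∈ t.filter (fun i => v i = u), w i, ?_, ?_⟩
    · intro u
      exact Finset.sum_nonneg fun i hi => hw i (Finset.mem_of_mem_filter i hi)
    · rw [← Finset.sum_fiberwise_of_maps_to hv (fun i => w i • v i)]
      refine Finset.sum_congr rfl fun u _ => ?_
      rw [Finset.sum_smul]
      exact Finset.sum_congr rfl fun i hi => by rw [(Finset.mem_filter.mp hi).2]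
  -- move to a Euclidean model
  set n := Module.finrank ℝ V with hn
  let e : V ≃ₗ[ℝ] (Fin n → ℝ) := (Module.finBasis ℝ V).equivFun
  set K : Set (Fin n → ℝ) := convexHull ℝ (e '' ((s : Set V) \ {0})) with hK
  have hKfin : ((e '' ((s : Set V) \ {0}))).Finite :=
    ((s.finite_toSet).diff).image _
  have hKclosed : IsClosed K := (hKfin.isCompact_convexHull (𝕜 := ℝ)).isClosed
  have hKconv : Convex ℝ K := convex_convexHull ℝ _
  have h0K : (0 : Fin n → ℝ) ∉ K := by
    intro h0
    rw [hK, convexHull_eq] at h0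
    obtain ⟨ι, t, w, z, hw, hw1, hz, hcm⟩ := h0
    rw [Finset.centerMass_eq_of_sum_1 _ _ hw1] at hcm
    have hz' : ∀ i ∈ t, e.symm (z i) ∈ (s : Set V) \ {0} := by
      intro i hi
      obtain ⟨u, hu, hue⟩ := hz i hi
      rw [← hue, LinearEquiv.symm_apply_apply]; exact hu
    have hsum0 : ∑ i ∈ t, w i • e.symm (z i) = 0 := by
      apply e.injective
      rw [map_sum, map_zero]
      simpa [LinearEquiv.apply_symm_apply] using hcm
    obtain ⟨i0, hi0, hwi0⟩ : ∃ i ∈ t, 0 < w i := by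
      by_contra h
      push_neg at h
      have : (1:ℝ) ≤ 0 := hw1 ▸ Finset.sum_nonpos h
      linarith
    have h1 : w i0 • e.symm (z i0) ∈ C := by
      have := hsum ({i0} : Finset ι) w (fun i => e.symm (z i))
        (fun i hi => by rw [Finset.mem_singleton.mp hi]; exact le_of_lt hwi0)
        (fun i hi => by rw [Finset.mem_singleton.mp hi]; exact (hz' i0 hi0).1)
      simpa using this
    have h2 : w i0 • e.symm (z i0) ∈ -C := by
      have hrest : ∑ i ∈ t.erase i0, w i • e.symm (z i) ∈ C :=
        hsum _ _ _ (fun i hi => hw i (Finset.mem_of_mem_erase hi))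
          (fun i hi => (hz' i (Finset.mem_of_mem_erase hi)).1)
      rw [Set.mem_neg]
      have hadd := Finset.add_sum_erase t (fun i => w i • e.symm (z i)) hi0
      rw [hsum0] at hadd
      have : -(w i0 • e.symm (z i0)) = ∑ i ∈ t.erase i0, w i • e.symm (z i) := by
        rw [eq_neg_of_add_eq_zero_left hadd, neg_neg]
      rw [this]; exact hrest
    have : w i0 • e.symm (z i0) = 0 := by
      have := hpt ▸ Set.mem_inter h1 h2
      simpa using this
    rcases smul_eq_zero.mp this with h | h
    · exact absurd h (ne_of_gt hwi0)
    · exact (hz' i0 hi0).2 h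
  obtain ⟨g, u, hgu, hgK⟩ := geometric_hahn_banach_point_closed hKconv hKclosed h0K
  have hu0 : 0 < u := by simpa using hgu
  refine ⟨(g : (Fin n → ℝ) →ₗ[ℝ] ℝ).comp (e : V →ₗ[ℝ] (Fin n → ℝ)), ?_, ?_⟩
  all_goals {
    have hpos : ∀ v ∈ s, v ≠ 0 → 0 < g (e v) := by
      intro v hv hv0
      have : e v ∈ K := subset_convexHull ℝ _ ⟨v, ⟨hv, hv0⟩, rfl⟩
      exact lt_trans hu0 (hgK _ this)
    first
    | { -- nonnegativity
        intro x hx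
        rw [hs] at hx
        obtain ⟨c, hc, rfl⟩ := hx
        simp only [LinearMap.comp_apply, LinearEquiv.coe_coe, map_sum, map_smul,
          ContinuousLinearMap.coe_coe, smul_eq_mul]
        refine Finset.sum_nonneg fun v hv => ?_
        rcases eq_or_ne v 0 with rfl | hv0
        · simp
        · exact mul_nonneg (hc v) (le_of_lt (hpos v hv hv0)) }
    | { -- strictness
        intro x hx hfx
        rw [hs] at hx
        obtain ⟨c, hc, rfl⟩ := hx
        rw [show ((g : (Fin n → ℝ) →ₗ[ℝ] ℝ).comp (e : V →ₗ[ℝ] (Fin n → ℝ)))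
            (∑ v ∈ s, c v • v) = ∑ v ∈ s, c v * g (e v) by
          simp [map_sum, map_smul, smul_eq_mul]] at hfx
        have hterm : ∀ v ∈ s, c v * g (e v) = 0 := by
          refine (Finset.sum_eq_zero_iff_of_nonneg ?_).mp hfx
          intro v hv
          rcases eq_or_ne v 0 with rfl | hv0
          · simp
          · exact mul_nonneg (hc v) (le_of_lt (hpos v hv hv0))
        refine Finset.sum_eq_zero fun v hv => ?_
        rcases eq_or_ne v 0 with rfl | hv0
        · simp
        · have : c v = 0 := by
            have h := hterm v hv
            have := hpos v hv hv0
            rcases mul_eq_zero.mp h with h' | h'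
            · exact h'
            · exact absurd h' (ne_of_gt this)
          rw [this, zero_smul] }
  }

theorem stmt_2 {V W : Type*}
    [AddCommGroup V] [Module ℝ V] [FiniteDimensional ℝ V]
    [AddCommGroup W] [Module ℝ W] [FiniteDimensional ℝ W]
    (C : Set V) (D : Set W)
    (hC : IsPolyhedralCone C) (hD : IsPolyhedralCone D)
    (hCpointed : C ∩ (-C) = {0}) (hDpointed : D ∩ (-D) = {0})
    (hCspan : Submodule.span ℝ C = ⊤) (hDspan : Submodule.span ℝ D = ⊤) :
    tensorCone C D ∩ (-(tensorCone C D)) = {0} ∧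
    Submodule.span ℝ (tensorCone C D) = ⊤ := by
  obtain ⟨f, hf0, hf1⟩ := exists_strict_pos_functional hC hCpointed
  obtain ⟨g, hg0, hg1⟩ := exists_strict_pos_functional hD hDpointed
  -- the product functional on the tensor product
  set B : V →ₗ[ℝ] W →ₗ[ℝ] ℝ := LinearMap.mk₂ ℝ (fun x y => f x * g y)
    (fun x x' y => by simp [map_add, add_mul])
    (fun a x y => by simp [map_smul, smul_eq_mul, mul_assoc])
    (fun x y y' => by simp [map_add, mul_add])
    (fun a x y => by simp [map_smul, smul_eq_mul]; ring) with hB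
  set F : V ⊗[ℝ] W →ₗ[ℝ] ℝ := TensorProduct.lift B with hF
  have hFtmul : ∀ (x : V) (y : W), F (x ⊗ₜ[ℝ] y) = f x * g y := by
    intro x y; simp [hF, hB]
  have hFnn : ∀ z ∈ tensorCone C D, 0 ≤ F z := by
    rintro z ⟨m, c, x, y, hc, hx, hy, rfl⟩
    rw [map_sum]
    refine Finset.sum_nonneg fun i _ => ?_
    rw [map_smul, smul_eq_mul, hFtmul]
    exact mul_nonneg (hc i) (mul_nonneg (hf0 _ (hx i)) (hg0 _ (hy i)))
  have hFzero : ∀ z ∈ tensorCone C D, F z = 0 → z = 0 := by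
    rintro z ⟨m, c, x, y, hc, hx, hy, rfl⟩ hz
    rw [map_sum] at hz
    have hterm : ∀ i ∈ Finset.univ (α := Fin m), F (c i • (x i ⊗ₜ[ℝ] y i)) = 0 := by
      refine (Finset.sum_eq_zero_iff_of_nonneg ?_).mp hz
      intro i _
      rw [map_smul, smul_eq_mul, hFtmul]
      exact mul_nonneg (hc i) (mul_nonneg (hf0 _ (hx i)) (hg0 _ (hy i)))
    refine Finset.sum_eq_zero fun i _ => ?_
    have h := hterm i (Finset.mem_univ i)
    rw [map_smul, smul_eq_mul, hFtmul] at h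
    rcases mul_eq_zero.mp h with h' | h'
    · rw [h', zero_smul]
    · rcases mul_eq_zero.mp h' with h'' | h''
      · rw [hf1 _ (hx i) h'', TensorProduct.zero_tmul, smul_zero]
      · rw [hg1 _ (hy i) h'', TensorProduct.tmul_zero, smul_zero]
  have hzero_mem : (0 : V ⊗[ℝ] W) ∈ tensorCone C D :=
    ⟨0, Fin.elim0, Fin.elim0, Fin.elim0, fun i => i.elim0, fun i => i.elim0,
      fun i => i.elim0, by simp⟩
  constructor
  · ext z
    simp only [Set.mem_inter_iff, Set.mem_neg, Set.mem_singleton_iff]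
    constructor
    · rintro ⟨hz1, hz2⟩
      have h1 := hFnn z hz1
      have h2 := hFnn (-z) hz2
      rw [map_neg] at h2
      exact hFzero z hz1 (le_antisymm (by linarith) h1)
    · rintro rfl
      exact ⟨hzero_mem, by rw [neg_zero]; exact hzero_mem⟩
  · -- span
    have htm : ∀ x ∈ C, ∀ y ∈ D, x ⊗ₜ[ℝ] y ∈ tensorCone C D := by
      intro x hx y hy
      exact ⟨1, fun _ => 1, fun _ => x, fun _ => y, fun _ => zero_le_one,
        fun _ => hx, fun _ => hy, by simp⟩
    set S := Submodule.span ℝ (tensorCone C D) with hS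
    have h1 : ∀ y ∈ D, ∀ x : V, x ⊗ₜ[ℝ] y ∈ S := by
      intro y hy
      have hle : Submodule.span ℝ C ≤
          Submodule.comap ((TensorProduct.mk ℝ V W).flip y) S := by
        rw [Submodule.span_le]
        intro x hx
        exact Submodule.subset_span (htm x hx y hy)
      intro x
      have := hle (hCspan ▸ Submodule.mem_top : x ∈ Submodule.span ℝ C)
      simpa using this
    have h2 : ∀ (x : V) (y : W), x ⊗ₜ[ℝ] y ∈ S := by
      intro x
      have hle : Submodule.span ℝ D ≤
          Submodule.comap (TensorProduct.mk ℝ V W x) S := by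
        rw [Submodule.span_le]
        intro y hy
        exact h1 y hy x
      intro y
      have := hle (hDspan ▸ Submodule.mem_top : y ∈ Submodule.span ℝ D)
      simpa using this
    rw [eq_top_iff, ← TensorProduct.span_tmul_eq_top ℝ V W, Submodule.span_le]
    rintro _ ⟨x, y, rfl⟩
    exact h2 x y
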